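/- If pointed topological spaces (X_i, *_i), i ≥ 1, are each locally contractible (locally contractible at every point and strongly locally contractible at the basepoint), then the small box product ⊡_{i≥1}(X_i, *_i), i.e., the subspace of the box product consisting of sequences equal to the basepoint in all but finitely many coordinates with the distinguished point (*_i)_i, is locally contractible as a pointed space. -/

import Mathlib

open unitInterval

/-- `X` is locally contractible at `x`: every neighborhood `V` of `x` contains a
neighborhood `U` of `x` that contracts to `x` within `V`. -/
def LocContractibleAt (X : Type*) [TopologicalSpace X] (x : X) : Prop :=
  ∀ V ∈ nhds x, ∃ U ∈ nhds x, U ⊆ V ∧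
    ∃ H : I × ↥U → X, Continuous H ∧
      (∀ u : ↥U, H (0, u) = (u : X)) ∧
      (∀ u : ↥U, H (1, u) = x) ∧
      (∀ (t : I) (u : ↥U), H (t, u) ∈ V)

/-- `X` is strongly locally contractible at `x`: additionally the contraction keeps
`x` fixed. -/
def StronglyLocContractibleAt (X : Type*) [TopologicalSpace X] (x : X) : Prop :=
  ∀ V ∈ nhds x, ∃ U ∈ nhds x, U ⊆ V ∧
    ∃ H : I × ↥U → X, Continuous H ∧
      (∀ u : ↥U, H (0, u) = (u : X)) ∧
      (∀ u : ↥U, H (1, u) = x) ∧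
      (∀ (t : I) (u : ↥U), H (t, u) ∈ V) ∧
      (∀ (t : I) (hx : x ∈ U), H (t, ⟨x, hx⟩) = x)

/-- The box topology on a countable product. -/
def boxTopology (X : ℕ → Type*) [∀ i, TopologicalSpace (X i)] :
    TopologicalSpace (∀ i, X i) :=
  TopologicalSpace.generateFrom
    {S | ∃ U : ∀ i, Set (X i), (∀ i, IsOpen (U i)) ∧ S = Set.univ.pi U}

/-- The small box product: sequences equal to the basepoint in all but finitely
many coordinates. -/
def SmallBox (X : ℕ → Type*) (pt : ∀ i, X i) : Type _ :=
  {x : ∀ i, X i // {i | x i ≠ pt i}.Finite}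

instance (X : ℕ → Type*) [∀ i, TopologicalSpace (X i)] (pt : ∀ i, X i) :
    TopologicalSpace (SmallBox X pt) :=
  TopologicalSpace.induced (fun x => x.1) (boxTopology X)

/-- The boxes form a topological basis for the box topology. -/
lemma boxBasis (X : ℕ → Type*) [∀ i, TopologicalSpace (X i)] :
    @TopologicalSpace.IsTopologicalBasis (∀ i, X i) (boxTopology X)
      {S | ∃ U : ∀ i, Set (X i), (∀ i, IsOpen (U i)) ∧ S = Set.univ.pi U} := by
  refine @TopologicalSpace.IsTopologicalBasis.mk _ (boxTopology X) _ ?_ ?_ rfl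
  · rintro t₁ ⟨U, hU, rfl⟩ t₂ ⟨W, hW, rfl⟩ x hx
    refine ⟨Set.univ.pi (fun i => U i ∩ W i),
      ⟨fun i => U i ∩ W i, fun i => (hU i).inter (hW i), rfl⟩, ?_, ?_⟩
    · rw [Set.pi_inter_distrib]; exact hx
    · rw [Set.pi_inter_distrib]
  · apply Set.eq_univ_of_univ_subset
    intro x _
    exact ⟨Set.univ.pi (fun _ => Set.univ),
      ⟨fun _ => Set.univ, fun _ => isOpen_univ, rfl⟩, by simp⟩

lemma box_isOpen (X : ℕ → Type*) [∀ i, TopologicalSpace (X i)]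
    (U : ∀ i, Set (X i)) (hU : ∀ i, IsOpen (U i)) :
    @IsOpen _ (boxTopology X) (Set.univ.pi U) :=
  TopologicalSpace.GenerateOpen.basic _ ⟨U, hU, rfl⟩

/-- Key construction lemma: contraction of a neighborhood in the small box product. -/
lemma smallBox_key (X : ℕ → Type*) [∀ i, TopologicalSpace (X i)] (pt : ∀ i, X i)
    (hloc : ∀ i, ∀ y : X i, LocContractibleAt (X i) y)
    (hstr : ∀ i, StronglyLocContractibleAt (X i) (pt i))
    (y : SmallBox X pt) (V : Set (SmallBox X pt)) (hV : V ∈ nhds y) :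
    ∃ U ∈ nhds y, U ⊆ V ∧ ∃ H : I × ↥U → SmallBox X pt, Continuous H ∧
      (∀ u : ↥U, H (0, u) = (u : SmallBox X pt)) ∧
      (∀ u : ↥U, H (1, u) = y) ∧
      (∀ (t : I) (u : ↥U), H (t, u) ∈ V) ∧
      ((∀ i, y.1 i = pt i) → ∀ (t : I) (h : y ∈ U), H (t, ⟨y, h⟩) = y) := by
  classical
  have hnhds : nhds y = Filter.comap Subtype.val (@nhds _ (boxTopology X) y.1) :=
    @nhds_induced _ _ (boxTopology X) Subtype.val y
  rw [hnhds] at hV; replace hV := Filter.mem_comap.1 hV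
  obtain ⟨V', hV'nhds, hV'sub⟩ := hV
  obtain ⟨B, ⟨W, hWopen, rfl⟩, hyB, hBV'⟩ := (@TopologicalSpace.IsTopologicalBasis.mem_nhds_iff _ (boxTopology X) y.1 V' _ (boxBasis X)).1 hV'nhds
  have hyW : ∀ i, y.1 i ∈ W i := fun i => hyB i (Set.mem_univ i)
  -- per-coordinate contractions
  have keyi : ∀ i, ∃ U : Set (X i), IsOpen U ∧ y.1 i ∈ U ∧ U ⊆ W i ∧
      ∃ H : I × ↥U → X i, Continuous H ∧ (∀ u, H (0, u) = (u : X i)) ∧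
        (∀ u, H (1, u) = y.1 i) ∧ (∀ t u, H (t, u) ∈ W i) ∧
        (y.1 i = pt i → ∀ (t : I) (hm : pt i ∈ U), H (t, ⟨pt i, hm⟩) = pt i) := by
    intro i
    by_cases hi : y.1 i = pt i
    · obtain ⟨U, hUnhds, hUW, H, hc, h0, h1, hin, hfix⟩ :=
        hstr i (W i) ((hWopen i).mem_nhds (hi ▸ hyW i))
      refine ⟨interior U, isOpen_interior, ?_, interior_subset.trans hUW,
        fun p => H (p.1, Set.inclusion interior_subset p.2),
        hc.comp (continuous_fst.prodMk
          ((continuous_inclusion interior_subset).comp continuous_snd)),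
        fun u => h0 _, fun u => (h1 _).trans hi.symm, fun t u => hin t _,
        fun _ t hm => hfix t _⟩
      rw [hi]; exact mem_interior_iff_mem_nhds.2 hUnhds
    · obtain ⟨U, hUnhds, hUW, H, hc, h0, h1, hin⟩ :=
        hloc i (y.1 i) (W i) ((hWopen i).mem_nhds (hyW i))
      exact ⟨interior U, isOpen_interior, mem_interior_iff_mem_nhds.2 hUnhds,
        interior_subset.trans hUW,
        fun p => H (p.1, Set.inclusion interior_subset p.2),
        hc.comp (continuous_fst.prodMk
          ((continuous_inclusion interior_subset).comp continuous_snd)),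
        fun u => h0 _, fun u => h1 _, fun t u => hin t _, fun h => absurd h hi⟩
  choose U hUo hyU hUW Hc hHcont hH0 hH1 hHin hHfix using keyi
  set Ubig : Set (SmallBox X pt) := Subtype.val ⁻¹' Set.univ.pi U with hUbig_def
  have hmemU : ∀ u : ↥Ubig, ∀ i, u.1.1 i ∈ U i := fun u i => u.2 i (Set.mem_univ i)
  have hcont_val : @Continuous (SmallBox X pt) (∀ i, X i) _ (boxTopology X) Subtype.val :=
    continuous_induced_dom
  have hUbigOpen : IsOpen Ubig :=
    @IsOpen.preimage _ _ (instTopologicalSpaceSmallBox X pt) (boxTopology X) Subtype.val hcont_val _ (box_isOpen X U hUo)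
  have hyUbig : y ∈ Ubig := fun i _ => hyU i
  have hUbig_nhds : Ubig ∈ nhds y := hUbigOpen.mem_nhds hyUbig
  have hUbigV : Ubig ⊆ V := by
    intro u hu
    exact hV'sub (hBV' (fun i _ => hUW i (hu i (Set.mem_univ i))))
  -- the homotopy
  have hfin : ∀ (t : I) (u : ↥Ubig),
      {i | Hc i (t, ⟨u.1.1 i, hmemU u i⟩) ≠ pt i}.Finite := by
    intro t u
    refine Set.Finite.subset (u.1.2.union y.2) ?_
    intro i hi
    simp only [Set.mem_setOf_eq] at hi
    by_contra hc
    simp only [Set.mem_union, Set.mem_setOf_eq, not_or, not_not] at hc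
    apply hi
    have h1 : (⟨u.1.1 i, hmemU u i⟩ : ↥(U i)) = ⟨pt i, hc.1 ▸ hmemU u i⟩ :=
      Subtype.ext hc.1
    rw [h1]
    exact hHfix i hc.2 t _
  refine ⟨Ubig, hUbig_nhds, hUbigV,
    fun p => ⟨fun i => Hc i (p.1, ⟨p.2.1.1 i, hmemU p.2 i⟩), hfin p.1 p.2⟩,
    ?_, ?_, ?_, ?_, ?_⟩
  · -- continuity
    apply continuous_induced_rng.2
    refine continuous_generateFrom_iff.2 ?_
    rintro S ⟨S', hS'open, rfl⟩
    rw [isOpen_iff_mem_nhds]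
    rintro ⟨t, u⟩ hp
    have hpS : ∀ i, Hc i (t, ⟨u.1.1 i, hmemU u i⟩) ∈ S' i := fun i => hp i (Set.mem_univ i)
    set F : Set ℕ := {i | u.1.1 i ≠ pt i} ∪ {i | y.1 i ≠ pt i} with hF_def
    have hFfin : F.Finite := u.1.2.union y.2
    have hcoord : ∀ i, ∃ (T : Set I) (Z : Set (X i)), IsOpen T ∧ IsOpen Z ∧ t ∈ T ∧
        u.1.1 i ∈ Z ∧ Z ⊆ U i ∧
        (∀ t' ∈ T, ∀ x : ↥(U i), x.1 ∈ Z → Hc i (t', x) ∈ S' i) ∧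
        (i ∉ F → T = Set.univ) := by
      intro i
      have hP : IsOpen (Hc i ⁻¹' S' i) := (hS'open i).preimage (hHcont i)
      by_cases hi : i ∈ F
      · obtain ⟨T, v, hT, hv, htT, huv, hsub⟩ :=
          isOpen_prod_iff.1 hP t ⟨u.1.1 i, hmemU u i⟩ (hpS i)
        refine ⟨T, Subtype.val '' v, hT, (hUo i).isOpenMap_subtype_val v hv, htT,
          ⟨_, huv, rfl⟩, ?_, ?_, fun h => absurd hi h⟩
        · rintro x ⟨a, _, rfl⟩; exact a.2
        · intro t' ht' x hx
          obtain ⟨a, ha, hax⟩ := hx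
          have hxa : x = a := Subtype.ext hax.symm
          rw [hxa]
          exact hsub (Set.mk_mem_prod ht' ha)
      · simp only [hF_def, Set.mem_union, Set.mem_setOf_eq, not_or, not_not] at hi
        have hptU : pt i ∈ U i := hi.2 ▸ hyU i
        have hptS : pt i ∈ S' i := by
          have h1 : (⟨u.1.1 i, hmemU u i⟩ : ↥(U i)) = ⟨pt i, hptU⟩ := Subtype.ext hi.1
          have h2 := hpS i
          rw [h1, hHfix i hi.2 t hptU] at h2
          exact h2
        have hsub : (Set.univ ×ˢ ({⟨pt i, hptU⟩} : Set ↥(U i))) ⊆ Hc i ⁻¹' S' i := by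
          rintro ⟨t', x⟩ ⟨-, hx⟩
          simp only [Set.mem_singleton_iff] at hx
          subst hx
          show Hc i (t', _) ∈ S' i
          rw [hHfix i hi.2 t' hptU]
          exact hptS
        obtain ⟨a, v, _, hv, hsa, hsv, hav⟩ :=
          generalized_tube_lemma isCompact_univ isCompact_singleton hP hsub
        refine ⟨Set.univ, Subtype.val '' v, isOpen_univ,
          (hUo i).isOpenMap_subtype_val v hv, Set.mem_univ _, ?_, ?_, ?_, fun _ => rfl⟩
        · exact ⟨⟨pt i, hptU⟩, hsv rfl, hi.1.symm⟩
        · rintro x ⟨b, _, rfl⟩; exact b.2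
        · intro t' _ x hx
          obtain ⟨b, hb, hbx⟩ := hx
          have hxb : x = b := Subtype.ext hbx.symm
          rw [hxb]
          exact hav (Set.mk_mem_prod (hsa (Set.mem_univ t')) hb)
    choose T Z hTopen hZopen htT hxZ hZU hprop hTuniv using hcoord
    have hN1 : IsOpen (⋂ i ∈ F, T i) := hFfin.isOpen_biInter fun i _ => hTopen i
    have htN1 : t ∈ ⋂ i ∈ F, T i := Set.mem_biInter fun i _ => htT i
    have hcont2 : @Continuous (↥Ubig) (∀ i, X i) _ (boxTopology X) (fun w => w.1.1) :=
      @Continuous.comp (↥Ubig) (SmallBox X pt) (∀ i, X i) _ _ (boxTopology X) _ _ hcont_val continuous_subtype_val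
    have hN2 : IsOpen ((fun w : ↥Ubig => w.1.1) ⁻¹' Set.univ.pi Z) :=
      @IsOpen.preimage _ _ _ (boxTopology X) _ hcont2 _ (box_isOpen X Z hZopen)
    have huN2 : u ∈ (fun w : ↥Ubig => w.1.1) ⁻¹' Set.univ.pi Z := fun i _ => hxZ i
    refine Filter.mem_of_superset
      (prod_mem_nhds (hN1.mem_nhds htN1) (hN2.mem_nhds huN2)) ?_
    rintro ⟨t', u'⟩ ⟨ht', hu'⟩
    intro i _
    by_cases hi : i ∈ F
    · exact hprop i t' (Set.mem_iInter₂.1 ht' i hi) _ (hu' i (Set.mem_univ i))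
    · exact hprop i t' ((hTuniv i hi) ▸ Set.mem_univ t') _ (hu' i (Set.mem_univ i))
  · intro u
    exact Subtype.ext (funext fun i => hH0 i _)
  · intro u
    exact Subtype.ext (funext fun i => hH1 i _)
  · intro t u
    refine hV'sub (hBV' ?_)
    intro i _
    exact hHin i t _
  · intro hall t h
    apply Subtype.ext
    funext i
    have e : ∀ (a b : ↥(U i)), a.1 = b.1 → Hc i (t, a) = Hc i (t, b) := by
      rintro ⟨a, ha⟩ ⟨b, hb⟩ hab
      cases hab
      rfl
    have hptU : pt i ∈ U i := (hall i) ▸ hyU i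
    exact (e _ ⟨pt i, hptU⟩ (hall i)).trans
      ((hHfix i (hall i) t hptU).trans (hall i).symm)

/-- If each pointed space `(X_i, *_i)` is locally contractible (at every point, and
strongly at the basepoint), then the small box product is locally contractible as a
pointed space. -/
theorem smallBox_locally_contractible
    (X : ℕ → Type*) [∀ i, TopologicalSpace (X i)] (pt : ∀ i, X i)
    (hloc : ∀ i, ∀ y : X i, LocContractibleAt (X i) y)
    (hstr : ∀ i, StronglyLocContractibleAt (X i) (pt i)) :
    (∀ y : SmallBox X pt, LocContractibleAt (SmallBox X pt) y) ∧
      StronglyLocContractibleAt (SmallBox X pt)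
        ⟨pt, by simp⟩ := by
  constructor
  · intro y V hV
    obtain ⟨U, hU, hUV, H, hc, h0, h1, hin, -⟩ := smallBox_key X pt hloc hstr y V hV
    exact ⟨U, hU, hUV, H, hc, h0, h1, hin⟩
  · intro V hV
    obtain ⟨U, hU, hUV, H, hc, h0, h1, hin, hfix⟩ :=
      smallBox_key X pt hloc hstr ⟨pt, by simp⟩ V hV
    exact ⟨U, hU, hUV, H, hc, h0, h1, hin, fun t hx => hfix (fun _ => rfl) t hx⟩
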